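/- There exists T₀ > 0, depending only on λ and α (and not on r₀), such that for every Katok slow-down function ψ and every solution s=(s₁,s₂):[0,T]→ℝ² of the slow-down system, the Lebesgue measure of the set of times { t ∈ [0,T] : r₀/2 < s₁(t)²+s₂(t)² ≤ r₀ } is at most T₀. -/

import Mathlib

open Set MeasureTheory

section KatokAux

open Filter Topology

private lemma katok_deriv_nonneg_of_min {φ : ℝ → ℝ} {d x y : ℝ} (hxy : x < y)
    (hd : HasDerivAt φ d x) (h : ∀ t, x ≤ t → t ≤ y → φ x ≤ φ t) : 0 ≤ d := by
  have hs : Tendsto (slope φ x) (𝓝[>] x) (𝓝 d) := by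
    have h2 := (hd.hasDerivWithinAt (s := Ioi x))
    rw [hasDerivWithinAt_iff_tendsto_slope] at h2
    simpa using h2
  refine ge_of_tendsto hs ?_
  filter_upwards [Ioc_mem_nhdsGT_of_mem ⟨le_refl x, hxy⟩] with t ht
  rw [slope_def_field]
  exact div_nonneg (sub_nonneg.2 (h t ht.1.le ht.2)) (sub_nonneg.2 ht.1.le)

private lemma katok_deriv_nonpos_of_min {φ : ℝ → ℝ} {d x y : ℝ} (hxy : x < y)
    (hd : HasDerivAt φ d y) (h : ∀ t, x ≤ t → t ≤ y → φ y ≤ φ t) : d ≤ 0 := by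
  have hs : Tendsto (slope φ y) (𝓝[<] y) (𝓝 d) := by
    have h2 := (hd.hasDerivWithinAt (s := Iio y))
    rw [hasDerivWithinAt_iff_tendsto_slope] at h2
    simpa using h2
  refine le_of_tendsto hs ?_
  filter_upwards [Ico_mem_nhdsLT_of_mem ⟨hxy, le_refl y⟩] with t ht
  rw [slope_def_field]
  exact div_nonpos_of_nonneg_of_nonpos (sub_nonneg.2 (h t ht.1 ht.2.le))
    (sub_nonpos.2 ht.2.le)

/-- The key confinement claim: between two visits to the disc of radius `r₀`,
the orbit stays in the unit disc. -/
private lemma katok_confined (T a b r₀ c2 L : ℝ) (K f ψ : ℝ → ℝ)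
    (hL : 0 < L) (hr1 : r₀ < 1) (hr0nn : 0 ≤ r₀)
    (hIab : Icc a b ⊆ Icc (0:ℝ) T)
    (hKd : ∀ t ∈ Icc (0:ℝ) T, HasDerivAt K (2 * ψ (K t) * L * f t) t)
    (hfc : ∀ t ∈ Icc (0:ℝ) T, ContinuousAt f t)
    (hcons : ∀ t ∈ Icc (0:ℝ) T, K t ^ 2 - f t ^ 2 = c2)
    (hc2 : c2 ≤ r₀ ^ 2)
    (hψone : ψ 1 = 1)
    (hKa : K a ≤ r₀) (hKb : K b ≤ r₀) :
    ∀ t ∈ Icc a b, K t ≤ 1 := by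
  by_contra hcon
  push_neg at hcon
  obtain ⟨t0, ht0, hKt0⟩ := hcon
  have hKc : ∀ t ∈ Icc (0:ℝ) T, ContinuousAt K t := fun t ht => (hKd t ht).continuousAt
  -- a' : last time before t0 with K ≤ 1
  set A : Set ℝ := {t | t ∈ Icc a t0 ∧ K t ≤ 1} with hAdef
  have haA : a ∈ A := ⟨⟨le_refl a, ht0.1⟩, hKa.trans hr1.le⟩
  have hAne : A.Nonempty := ⟨a, haA⟩
  have hAbdd : BddAbove A := ⟨t0, fun x hx => hx.1.2⟩
  set a' : ℝ := sSup A with ha'def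
  have ha'cl : a' ∈ closure A := csSup_mem_closure hAne hAbdd
  have ha'mem : a' ∈ Icc a t0 :=
    closure_minimal (fun x hx => hx.1) isClosed_Icc ha'cl
  have ha'T : a' ∈ Icc (0:ℝ) T := hIab ⟨ha'mem.1, ha'mem.2.trans ht0.2⟩
  have hKa'le : K a' ≤ 1 := by
    have := ((hKc a' ha'T).continuousWithinAt (s := A)).mem_closure_image ha'cl
    have h3 : closure (K '' A) ⊆ Iic 1 := by
      refine closure_minimal ?_ isClosed_Iic
      rintro _ ⟨t, ht, rfl⟩; exact ht.2
    exact h3 this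
  have ha'lt : a' < t0 := by
    rcases eq_or_lt_of_le ha'mem.2 with h | h
    · exact absurd (h ▸ hKa'le) (not_le.2 hKt0)
    · exact h
  have hgtA : ∀ t, a' < t → t ≤ t0 → 1 < K t := by
    intro t h1 h2
    by_contra hle
    push_neg at hle
    exact absurd (le_csSup hAbdd ⟨⟨ha'mem.1.trans h1.le, h2⟩, hle⟩) (not_le.2 h1)
  -- b' : first time after t0 with K ≤ 1
  set B : Set ℝ := {t | t ∈ Icc t0 b ∧ K t ≤ 1} with hBdef
  have hbB : b ∈ B := ⟨⟨ht0.2, le_refl b⟩, hKb.trans hr1.le⟩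
  have hBne : B.Nonempty := ⟨b, hbB⟩
  have hBbdd : BddBelow B := ⟨t0, fun x hx => hx.1.1⟩
  set b' : ℝ := sInf B with hb'def
  have hb'cl : b' ∈ closure B := csInf_mem_closure hBne hBbdd
  have hb'mem : b' ∈ Icc t0 b :=
    closure_minimal (fun x hx => hx.1) isClosed_Icc hb'cl
  have hb'T : b' ∈ Icc (0:ℝ) T := hIab ⟨ht0.1.trans hb'mem.1, hb'mem.2⟩
  have hKb'le : K b' ≤ 1 := by
    have := ((hKc b' hb'T).continuousWithinAt (s := B)).mem_closure_image hb'cl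
    have h3 : closure (K '' B) ⊆ Iic 1 := by
      refine closure_minimal ?_ isClosed_Iic
      rintro _ ⟨t, ht, rfl⟩; exact ht.2
    exact h3 this
  have hb'gt : t0 < b' := by
    rcases eq_or_lt_of_le hb'mem.1 with h | h
    · exact absurd (h ▸ hKt0) (not_lt.2 hKb'le)
    · exact h
  have hgtB : ∀ t, t0 ≤ t → t < b' → 1 < K t := by
    intro t h1 h2
    by_contra hle
    push_neg at hle
    exact absurd (csInf_le hBbdd ⟨⟨h1, h2.le.trans hb'mem.2⟩, hle⟩) (not_le.2 h2)
  have ha'b' : a' < b' := ha'lt.trans hb'gt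
  have hsubT : Icc a' b' ⊆ Icc (0:ℝ) T := fun t ht =>
    hIab ⟨ha'mem.1.trans ht.1, ht.2.trans hb'mem.2⟩
  have hKa'ge : 1 ≤ K a' := by
    have hcw : Tendsto K (𝓝[>] a') (𝓝 (K a')) :=
      (hKc a' ha'T).continuousWithinAt
    refine ge_of_tendsto hcw ?_
    filter_upwards [Ioc_mem_nhdsGT_of_mem ⟨le_refl a', ha'lt⟩] with u hu
    exact (hgtA u hu.1 hu.2).le
  have hKb'ge : 1 ≤ K b' := by
    have hcw : Tendsto K (𝓝[<] b') (𝓝 (K b')) :=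
      (hKc b' hb'T).continuousWithinAt
    refine ge_of_tendsto hcw ?_
    filter_upwards [Ico_mem_nhdsLT_of_mem ⟨hb'gt, le_refl b'⟩] with u hu
    exact (hgtB u hu.1 hu.2).le
  have hKge1 : ∀ t ∈ Icc a' b', 1 ≤ K t := by
    intro t ht
    rcases eq_or_lt_of_le ht.1 with h | h
    · rw [← h]; exact hKa'ge
    · rcases le_or_gt t t0 with h2 | h2
      · exact (hgtA t h h2).le
      · rcases eq_or_lt_of_le ht.2 with h3 | h3
        · rw [h3]; exact hKb'ge
        · exact (hgtB t h2.le h3).le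
  -- f² > 0 on [a', b']
  have hf2 : ∀ t ∈ Icc a' b', 0 < f t ^ 2 := by
    intro t ht
    have h1 : 1 ≤ K t := hKge1 t ht
    have h2 := hcons t (hsubT ht)
    nlinarith [hr1, hc2]
  have hKa'eq : K a' = 1 :=
    le_antisymm hKa'le (hKge1 a' ⟨le_refl a', ha'b'.le⟩)
  have hKb'eq : K b' = 1 :=
    le_antisymm hKb'le (hKge1 b' ⟨ha'b'.le, le_refl b'⟩)
  -- sign of f at a' and b'
  have hfa' : 0 < f a' := by
    have hmin : ∀ t, a' ≤ t → t ≤ b' → K a' ≤ K t := by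
      intro t h1 h2
      rw [hKa'eq]; exact hKge1 t ⟨h1, h2⟩
    have hd := katok_deriv_nonneg_of_min ha'b' (hKd a' ha'T) hmin
    rw [hKa'eq, hψone] at hd
    have hfnn : 0 ≤ f a' := by nlinarith
    have := hf2 a' ⟨le_refl a', ha'b'.le⟩
    rcases hfnn.eq_or_lt with h | h
    · exfalso; rw [← h] at this; simp at this
    · exact h
  have hfb' : f b' < 0 := by
    have hmin : ∀ t, a' ≤ t → t ≤ b' → K b' ≤ K t := by
      intro t h1 h2
      rw [hKb'eq]; exact hKge1 t ⟨h1, h2⟩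
    have hd := katok_deriv_nonpos_of_min ha'b' (hKd b' hb'T) hmin
    rw [hKb'eq, hψone] at hd
    have hfnp : f b' ≤ 0 := by nlinarith
    have := hf2 b' ⟨ha'b'.le, le_refl b'⟩
    rcases hfnp.eq_or_lt with h | h
    · exfalso; rw [h] at this; simp at this
    · exact h
  -- IVT contradiction
  have hfc' : ContinuousOn f (Icc a' b') := fun t ht =>
    (hfc t (hsubT ht)).continuousWithinAt
  have h0mem : (0:ℝ) ∈ Icc (f b') (f a') := ⟨hfb'.le, hfa'.le⟩
  obtain ⟨t1, ht1, hft1⟩ := intermediate_value_Icc' ha'b'.le hfc' h0mem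
  have := hf2 t1 ht1
  rw [hft1] at this
  simp at this

end KatokAux

set_option maxHeartbeats 1000000 in
/-- Lemma `tran-bound` of "Thermodynamics of the Katok Map": there is `T₀ > 0`,
depending only on `λ` and `α` (not on `r₀`), bounding the total time any orbit
of the slow-down system spends in the annulus `D_{r₀} \ D_{r₀/2}`. -/
theorem slowdown_annulus_time_bound :
    ∀ lam α : ℝ, 1 < lam → 0 < α → α < 1 →
    ∃ T₀ : ℝ, 0 < T₀ ∧
    ∀ r₀ : ℝ, 0 < r₀ → r₀ < 1 →
    ∀ ψ ψ' : ℝ → ℝ,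
      (∀ u ∈ Icc (0:ℝ) 1, ψ u ∈ Icc (0:ℝ) 1) →
      (∀ u ∈ Ioc (0:ℝ) 1, HasDerivAt ψ (ψ' u) u) →
      (∀ u : ℝ, r₀ ≤ u → u ≤ 1 → ψ u = 1) →
      (∀ u ∈ Ioo (0:ℝ) r₀, 0 < ψ' u) →
      AntitoneOn ψ' (Ioo (0:ℝ) r₀) →
      (∀ u : ℝ, 0 ≤ u → u ≤ r₀ / 2 → ψ u = (u / r₀) ^ α) →
    ∀ T : ℝ, 0 ≤ T →
    ∀ s₁ s₂ : ℝ → ℝ,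
      (∀ t ∈ Icc (0:ℝ) T,
        HasDerivAt s₁ (s₁ t * ψ (s₁ t ^ 2 + s₂ t ^ 2) * Real.log lam) t) →
      (∀ t ∈ Icc (0:ℝ) T,
        HasDerivAt s₂ (-(s₂ t * ψ (s₁ t ^ 2 + s₂ t ^ 2) * Real.log lam)) t) →
      volume {t : ℝ | t ∈ Icc (0:ℝ) T ∧
          r₀ / 2 < s₁ t ^ 2 + s₂ t ^ 2 ∧ s₁ t ^ 2 + s₂ t ^ 2 ≤ r₀} ≤
        ENNReal.ofReal T₀ := by
  intro lam α hlam hα0 hα1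
  set L := Real.log lam with hLdef
  have hL : 0 < L := Real.log_pos hlam
  refine ⟨2 * (2:ℝ) ^ α / L, by positivity, ?_⟩
  intro r₀ hr0 hr1 ψ ψ' hψ01 hψd hψ1 hψ'pos hψ'anti hψpow T hT s₁ s₂ hs₁ hs₂
  set K : ℝ → ℝ := fun t => s₁ t ^ 2 + s₂ t ^ 2 with hKdef
  set f : ℝ → ℝ := fun t => s₁ t ^ 2 - s₂ t ^ 2 with hfdef
  set E : Set ℝ := {t : ℝ | t ∈ Icc (0:ℝ) T ∧
      r₀ / 2 < s₁ t ^ 2 + s₂ t ^ 2 ∧ s₁ t ^ 2 + s₂ t ^ 2 ≤ r₀} with hEdef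
  have hEK : ∀ t, t ∈ E ↔ t ∈ Icc (0:ℝ) T ∧ r₀ / 2 < K t ∧ K t ≤ r₀ := by
    intro t; rfl
  rcases E.eq_empty_or_nonempty with hEe | hEne
  · rw [hEe]; simp
  -- derivatives
  have hKd : ∀ t ∈ Icc (0:ℝ) T, HasDerivAt K (2 * ψ (K t) * L * f t) t := by
    intro t ht
    have : HasDerivAt (fun x => s₁ x ^ 2 + s₂ x ^ 2) _ t := ((hs₁ t ht).fun_pow 2).add ((hs₂ t ht).fun_pow 2)
    convert this using 1
    simp [hKdef, hfdef]
    ring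
  have hfd : ∀ t ∈ Icc (0:ℝ) T, HasDerivAt f (2 * K t * ψ (K t) * L) t := by
    intro t ht
    have : HasDerivAt (fun x => s₁ x ^ 2 - s₂ x ^ 2) _ t := ((hs₁ t ht).fun_pow 2).sub ((hs₂ t ht).fun_pow 2)
    convert this using 1
    simp [hKdef, hfdef]
    ring
  have hKc : ∀ t ∈ Icc (0:ℝ) T, ContinuousAt K t := fun t ht => (hKd t ht).continuousAt
  have hfc : ∀ t ∈ Icc (0:ℝ) T, ContinuousAt f t := fun t ht => (hfd t ht).continuousAt
  have hKnn : ∀ t, 0 ≤ K t := fun t => by simp only [hKdef]; positivity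
  have habsf : ∀ t, |f t| ≤ K t := by
    intro t
    rw [abs_le]
    constructor <;> simp only [hKdef, hfdef] <;> nlinarith [sq_nonneg (s₁ t), sq_nonneg (s₂ t)]
  -- conservation law
  obtain ⟨e, he⟩ := hEne
  have hEne : E.Nonempty := ⟨e, he⟩
  have heT : e ∈ Icc (0:ℝ) T := ((hEK e).1 he).1
  set c2 : ℝ := K e ^ 2 - f e ^ 2 with hc2def
  have hcons : ∀ t ∈ Icc (0:ℝ) T, K t ^ 2 - f t ^ 2 = c2 := by
    have hgd : ∀ t ∈ Icc (0:ℝ) T, HasDerivAt (fun t => K t ^ 2 - f t ^ 2) 0 t := by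
      intro t ht
      have : HasDerivAt (fun x => K x ^ 2 - f x ^ 2) _ t := ((hKd t ht).fun_pow 2).sub ((hfd t ht).fun_pow 2)
      convert this using 1
      ring
    have hconst : ∀ t ∈ Icc (0:ℝ) T, K t ^ 2 - f t ^ 2 = K 0 ^ 2 - f 0 ^ 2 := by
      intro t ht
      exact constant_of_has_deriv_right_zero
        (fun x hx => (hgd x hx).continuousAt.continuousWithinAt)
        (fun x hx => (hgd x (Ico_subset_Icc_self hx)).hasDerivWithinAt) t ht
    intro t ht
    rw [hconst t ht, hc2def, hconst e heT]
  have hc2le : c2 ≤ r₀ ^ 2 := by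
    have h1 : K e ≤ r₀ := ((hEK e).1 he).2.2
    have h2 : 0 ≤ K e := hKnn e
    nlinarith [sq_nonneg (f e)]
  -- endpoints
  have hEsub : E ⊆ Icc (0:ℝ) T := fun t ht => ((hEK t).1 ht).1
  have hbddb : BddBelow E := ⟨0, fun x hx => (hEsub hx).1⟩
  have hbdda : BddAbove E := ⟨T, fun x hx => (hEsub hx).2⟩
  set a : ℝ := sInf E with hadef
  set b : ℝ := sSup E with hbdef
  have hacl : a ∈ closure E := csInf_mem_closure hEne hbddb
  have hbcl : b ∈ closure E := csSup_mem_closure hEne hbdda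
  have hclsub : closure E ⊆ Icc (0:ℝ) T := closure_minimal hEsub isClosed_Icc
  have haT : a ∈ Icc (0:ℝ) T := hclsub hacl
  have hbT : b ∈ Icc (0:ℝ) T := hclsub hbcl
  have hab : a ≤ b := csInf_le_csSup hEne hbddb hbdda
  have hIab : Icc a b ⊆ Icc (0:ℝ) T := fun t ht =>
    ⟨haT.1.trans ht.1, ht.2.trans hbT.2⟩
  have hKcl : ∀ x ∈ closure E, x ∈ Icc (0:ℝ) T → K x ≤ r₀ := by
    intro x hx hxT
    have h1 := ((hKc x hxT).continuousWithinAt (s := E)).mem_closure_image hx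
    have h2 : closure (K '' E) ⊆ Iic r₀ := by
      refine closure_minimal ?_ isClosed_Iic
      rintro _ ⟨t, ht, rfl⟩; exact ((hEK t).1 ht).2.2
    exact h2 h1
  have hKa : K a ≤ r₀ := hKcl a hacl haT
  have hKb : K b ≤ r₀ := hKcl b hbcl hbT
  -- confinement: K ≤ 1 on [a,b]
  have hψone : ψ 1 = 1 := hψ1 1 hr1.le (le_refl 1)
  have hK1 : ∀ t ∈ Icc a b, K t ≤ 1 :=
    katok_confined T a b r₀ c2 L K f ψ hL hr1 hr0.le hIab hKd hfc hcons hc2le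
      hψone hKa hKb
  -- f' := fun t => 2 * K t * ψ (K t) * L
  set F : ℝ → ℝ := fun t => 2 * K t * ψ (K t) * L with hFdef
  -- continuity of F on [a,b]
  have hψKc : ∀ t ∈ Icc a b, ContinuousAt (fun s => ψ (K s)) t := by
    intro t ht
    rcases (hKnn t).eq_or_lt with h0 | h0
    · have hψ0 : ψ (K t) = 0 := by
        rw [hψpow (K t) (hKnn t) (by rw [← h0]; positivity), ← h0]
        simp [Real.zero_rpow (ne_of_gt hα0)]
      rw [ContinuousAt, hψ0]
      have hev : ∀ᶠ s in nhds t, K s < r₀ / 2 :=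
        (hKc t (hIab ht)).eventually_lt continuousAt_const (by rw [← h0]; positivity)
      have hev2 : ∀ᶠ s in nhds t, ψ (K s) = (K s / r₀) ^ α := by
        filter_upwards [hev] with s hs
        exact hψpow (K s) (hKnn s) hs.le
      have htend : Filter.Tendsto (fun s => (K s / r₀) ^ α) (nhds t) (nhds 0) := by
        have h1 : Filter.Tendsto (fun s => K s / r₀) (nhds t) (nhds 0) := by
          have h2 := ((hKc t (hIab ht)).div_const r₀).tendsto
          rw [← h0, zero_div] at h2
          exact h2
        have h2 : ContinuousAt (fun x : ℝ => x ^ α) 0 :=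
          Real.continuousAt_rpow_const 0 α (Or.inr hα0.le)
        have := h2.tendsto.comp h1
        simpa [Function.comp_def, Real.zero_rpow (ne_of_gt hα0)] using this
      exact htend.congr' (Filter.EventuallyEq.symm hev2)
    · exact ((hψd (K t) ⟨h0, hK1 t ht⟩).continuousAt).comp (hKc t (hIab ht))
  have hFcont : ContinuousOn F (Icc a b) := by
    intro t ht
    have hc : ContinuousAt F t :=
      ((((hKc t (hIab ht)).const_mul 2).mul (hψKc t ht)).mul
        (continuousAt_const : ContinuousAt (fun _ : ℝ => L) t))
    exact hc.continuousWithinAt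
  -- F nonneg on [a,b]
  have hψKnn : ∀ t ∈ Icc a b, 0 ≤ ψ (K t) := by
    intro t ht
    exact (hψ01 (K t) ⟨hKnn t, hK1 t ht⟩).1
  have hFnn : ∀ t ∈ Icc a b, 0 ≤ F t := by
    intro t ht
    have := hψKnn t ht
    have := hKnn t
    simp only [hFdef]
    positivity
  -- lower bound on F on E
  set p : ℝ := ((1:ℝ)/2) ^ α with hpdef
  have hp : 0 < p := Real.rpow_pos_of_pos (by norm_num) α
  have hψlow : ∀ u : ℝ, r₀ / 2 ≤ u → u ≤ r₀ → p ≤ ψ u := by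
    intro u hu1 hu2
    have hsub : Icc (r₀/2) r₀ ⊆ Ioc (0:ℝ) 1 := fun x hx =>
      ⟨lt_of_lt_of_le (by linarith) hx.1, hx.2.trans hr1.le⟩
    have hmono : MonotoneOn ψ (Icc (r₀/2) r₀) := by
      refine monotoneOn_of_deriv_nonneg (convex_Icc _ _)
        (fun x hx => ((hψd x (hsub hx)).continuousAt).continuousWithinAt) ?_ ?_
      · intro x hx
        rw [interior_Icc] at hx
        exact ((hψd x (hsub (Ioo_subset_Icc_self hx))).differentiableAt).differentiableWithinAt
      · intro x hx
        rw [interior_Icc] at hx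
        rw [(hψd x (hsub (Ioo_subset_Icc_self hx))).deriv]
        exact (hψ'pos x ⟨by linarith [hx.1], hx.2⟩).le
    have h12 : ψ (r₀/2) = p := by
      rw [hψpow (r₀/2) (by positivity) (le_refl _), hpdef]
      congr 1
      field_simp
    calc p = ψ (r₀/2) := h12.symm
      _ ≤ ψ u := hmono ⟨le_refl _, by linarith⟩ ⟨hu1, hu2⟩ hu1
  set c₀ : ℝ := r₀ * p * L with hc₀def
  have hc₀ : 0 < c₀ := by positivity
  have hElow : ∀ t ∈ E, c₀ ≤ F t := by
    intro t ht
    obtain ⟨htT, h1, h2⟩ := (hEK t).1 ht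
    have h3 : p ≤ ψ (K t) := hψlow (K t) h1.le h2
    have h4 : 0 ≤ ψ (K t) := hp.le.trans h3
    simp only [hFdef, hc₀def]
    have h5 : r₀ * p ≤ 2 * K t * ψ (K t) := by
      have h6 : r₀ * p ≤ r₀ * ψ (K t) := mul_le_mul_of_nonneg_left h3 hr0.le
      have h7 : r₀ * ψ (K t) ≤ 2 * K t * ψ (K t) := by
        have h8 : r₀ ≤ 2 * K t := by
          simp only [hKdef] at h1 ⊢
          linarith
        exact mul_le_mul_of_nonneg_right h8 h4
      exact h6.trans h7
    calc r₀ * p * L ≤ 2 * K t * ψ (K t) * L :=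
          mul_le_mul_of_nonneg_right h5 hL.le
      _ = 2 * K t * ψ (K t) * L := rfl
  -- E ⊆ Icc a b
  have hEab : E ⊆ Icc a b := fun t ht =>
    ⟨csInf_le hbddb ht, le_csSup hbdda ht⟩
  -- measurability of E
  have hSclosed : ∀ r : ℝ, IsClosed {t | t ∈ Icc (0:ℝ) T ∧ K t ≤ r} := by
    intro r
    rw [← closure_subset_iff_isClosed]
    intro x hx
    have hcl : closure {t | t ∈ Icc (0:ℝ) T ∧ K t ≤ r} ⊆ Icc (0:ℝ) T :=
      closure_minimal (fun t ht => ht.1) isClosed_Icc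
    have hxT : x ∈ Icc (0:ℝ) T := hcl hx
    refine ⟨hxT, ?_⟩
    have h1 := ((hKc x hxT).continuousWithinAt
      (s := {t | t ∈ Icc (0:ℝ) T ∧ K t ≤ r})).mem_closure_image hx
    have h2 : closure (K '' {t | t ∈ Icc (0:ℝ) T ∧ K t ≤ r}) ⊆ Iic r := by
      refine closure_minimal ?_ isClosed_Iic
      rintro _ ⟨t, ht, rfl⟩; exact ht.2
    exact h2 h1
  have hEmeas : MeasurableSet E := by
    have heq : E = {t | t ∈ Icc (0:ℝ) T ∧ K t ≤ r₀} \
        {t | t ∈ Icc (0:ℝ) T ∧ K t ≤ r₀ / 2} := by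
      ext t
      simp only [hEK t, mem_diff, mem_setOf_eq]
      constructor
      · rintro ⟨h1, h2, h3⟩
        exact ⟨⟨h1, h3⟩, fun h => absurd h.2 (not_le.2 h2)⟩
      · rintro ⟨⟨h1, h3⟩, h2⟩
        refine ⟨h1, ?_, h3⟩
        by_contra h4
        push_neg at h4
        exact h2 ⟨h1, h4⟩
    rw [heq]
    exact ((hSclosed r₀).measurableSet).diff ((hSclosed (r₀/2)).measurableSet)
  -- endpoints of f
  have hfa : |f a| ≤ r₀ := (habsf a).trans hKa
  have hfb : |f b| ≤ r₀ := (habsf b).trans hKb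
  have hfsub : f b - f a ≤ 2 * r₀ := by
    rw [abs_le] at hfa hfb
    linarith [hfa.1, hfb.2]
  -- c₀ * T₀ = 2 * r₀
  have hpmul : p * (2:ℝ) ^ α = 1 := by
    rw [hpdef, ← Real.mul_rpow (by norm_num) (by norm_num)]
    norm_num
  have hT₀eq : f b - f a ≤ c₀ * (2 * (2:ℝ) ^ α / L) := by
    have : c₀ * (2 * (2:ℝ) ^ α / L) = 2 * r₀ := by
      rw [hc₀def]
      calc r₀ * p * L * (2 * (2:ℝ) ^ α / L)
          = r₀ * (p * (2:ℝ) ^ α) * 2 * (L / L) := by ring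
        _ = 2 * r₀ := by rw [hpmul, div_self hL.ne']; ring
    rw [this]
    exact hfsub
  -- final measure estimate
  have hfin : volume E < ⊤ :=
    lt_of_le_of_lt (measure_mono hEab) measure_Icc_lt_top
  have hint : IntegrableOn F (Icc a b) := hFcont.integrableOn_Icc
  have h1 : c₀ * (volume E).toReal ≤ ∫ t in E, F t :=
    setIntegral_ge_of_const_le_real hEmeas hfin.ne hElow (hint.mono_set hEab)
  have h2 : ∫ t in E, F t ≤ ∫ t in Icc a b, F t := by
    refine setIntegral_mono_set hint ?_ (HasSubset.Subset.eventuallyLE hEab)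
    exact (ae_restrict_iff' measurableSet_Icc).2 (ae_of_all _ hFnn)
  have h3 : ∫ t in Icc a b, F t = f b - f a := by
    rw [MeasureTheory.integral_Icc_eq_integral_Ioc,
      ← intervalIntegral.integral_of_le hab]
    refine intervalIntegral.integral_eq_sub_of_hasDerivAt ?_ ?_
    · intro t ht
      rw [uIcc_of_le hab] at ht
      exact hfd t (hIab ht)
    · rw [intervalIntegrable_iff_integrableOn_Icc_of_le hab]
      exact hint
  have h4 : (volume E).toReal ≤ 2 * (2:ℝ) ^ α / L := by
    have := (h1.trans h2).trans (h3.le.trans hT₀eq)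
    exact le_of_mul_le_mul_left this hc₀
  calc volume E = ENNReal.ofReal (volume E).toReal :=
        (ENNReal.ofReal_toReal hfin.ne).symm
    _ ≤ ENNReal.ofReal (2 * (2:ℝ) ^ α / L) := ENNReal.ofReal_le_ofReal h4
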